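/- Let p be an odd prime and let {a₁, …, a_k} be a k-Diophantine k-tuple in 𝔽_p with all aᵢ nonzero. If p > 4^{k+1}(3k+5)², then there exists x ∈ 𝔽_p \ {0, a₁, …, a_k} such that a₁a₂⋯a_k·x + 1 is a nonzero square in 𝔽_p; in particular {a₁, …, a_k, x} is a (k+1)-Diophantine (k+1)-tuple in 𝔽_p. -/

import Mathlib

theorem extend_k_diophantine_k_tuple (p k : ℕ) (hp : p.Prime) (hodd : Odd p)
    (a : Fin k → ZMod p) (hinj : Function.Injective a) (hnz : ∀ i, a i ≠ 0)
    (hsq : IsSquare ((∏ i, a i) + 1))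
    (hbig : 4 ^ (k + 1) * (3 * k + 5) ^ 2 < p) :
    ∃ x : ZMod p, x ≠ 0 ∧ (∀ i, x ≠ a i) ∧
      IsSquare ((∏ i, a i) * x + 1) ∧ (∏ i, a i) * x + 1 ≠ 0 := by
  have := Fact.mk hp
  set P := ∏ i, a i with hPdef
  have hP : P ≠ 0 := Finset.prod_ne_zero_iff.mpr fun i _ => hnz i
  have h4 : 4 ≤ 4 ^ (k + 1) := by
    calc 4 = 4 ^ 1 := rfl
    _ ≤ 4 ^ (k + 1) := Nat.pow_le_pow_right (by norm_num) (by omega)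
  have hpk : 2 * k + 8 < p := by
    have h1 : 4 * (3 * k + 5) ^ 2 ≤ 4 ^ (k + 1) * (3 * k + 5) ^ 2 :=
      Nat.mul_le_mul_right _ h4
    nlinarith
  have hcast : ∀ t : ℕ, 0 < t → t < p → (t : ZMod p) ≠ 0 := by
    intro t h1 h2 h0
    rw [ZMod.natCast_eq_zero_iff] at h0
    have := Nat.le_of_dvd h1 h0
    omega
  -- candidates
  set f : ℕ → ZMod p := fun t => ((t : ZMod p) ^ 2 - 1) * P⁻¹ with hf
  have hsqeq : ∀ s ∈ Finset.Icc 2 (k + 3), ∀ t ∈ Finset.Icc 2 (k + 3),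
      ((s : ZMod p) ^ 2 = (t : ZMod p) ^ 2) → s = t := by
    intro s hs t ht h
    simp only [Finset.mem_Icc] at hs ht
    have : ((s : ZMod p) - t) * ((s : ZMod p) + t) = 0 := by ring_nf; rw [h]; ring
    rcases mul_eq_zero.mp this with h' | h'
    · have : (s : ZMod p) = t := by linear_combination h'
      have := (ZMod.natCast_eq_natCast_iff _ _ _).mp this
      have := Nat.ModEq.eq_of_lt_of_lt this (by omega) (by omega)
      omega
    · exfalso
      have h0 : ((s + t : ℕ) : ZMod p) = 0 := by push_cast; linear_combination h'
      exact hcast (s + t) (by omega) (by omega) h0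
  have hinjf : Set.InjOn f (Finset.Icc 2 (k + 3)) := by
    intro s hs t ht h
    simp only [Finset.coe_Icc, Set.mem_Icc] at hs ht
    apply hsqeq s (Finset.mem_Icc.mpr hs) t (Finset.mem_Icc.mpr ht)
    have hPinv : (P⁻¹ : ZMod p) ≠ 0 := inv_ne_zero hP
    have := mul_right_cancel₀ hPinv h
    linear_combination this
  have hcard : ((Finset.Icc 2 (k + 3)).image f).card = k + 2 := by
    rw [Finset.card_image_of_injOn hinjf, Nat.card_Icc]; omega
  have hnotsub : ¬ ((Finset.Icc 2 (k + 3)).image f ⊆ Finset.univ.image a) := by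
    intro h
    have h1 := Finset.card_le_card h
    have h2 : (Finset.univ.image a).card ≤ k := by
      calc (Finset.univ.image a).card ≤ Finset.univ.card := Finset.card_image_le
      _ = k := by simp
    omega
  obtain ⟨x, hxmem, hxa⟩ := Finset.not_subset.mp hnotsub
  obtain ⟨t, ht, rfl⟩ := Finset.mem_image.mp hxmem
  simp only [Finset.mem_Icc] at ht
  have htp : (t : ZMod p) ≠ 0 := hcast t (by omega) (by omega)
  have hPx : P * f t + 1 = (t : ZMod p) ^ 2 := by
    simp only [hf]
    field_simp
    ring
  refine ⟨f t, ?_, ?_, ?_, ?_⟩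
  · intro h0
    have h1 : (t : ZMod p) ^ 2 = 1 := by
      have := hPx
      rw [h0] at this
      simpa using this.symm
    have : ((t : ZMod p) - 1) * ((t : ZMod p) + 1) = 0 := by linear_combination h1
    rcases mul_eq_zero.mp this with h' | h'
    · have : (t : ZMod p) = (1 : ℕ) := by push_cast; linear_combination h'
      have := (ZMod.natCast_eq_natCast_iff _ _ _).mp this
      have := Nat.ModEq.eq_of_lt_of_lt this (by omega) (by omega)
      omega
    · have h0 : ((t + 1 : ℕ) : ZMod p) = 0 := by push_cast; linear_combination h'
      exact hcast (t + 1) (by omega) (by omega) h0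
  · intro i h
    exact hxa (Finset.mem_image.mpr ⟨i, Finset.mem_univ i, h.symm⟩)
  · rw [hPx]; exact ⟨t, (sq (t : ZMod p)).symm ▸ by ring⟩
  · rw [hPx]; exact pow_ne_zero 2 htp
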